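/- Let p and q be projections (self-adjoint idempotents) in a C*-algebra. Then ‖p − q‖³ ≤ max(‖p − pqp‖, ‖q − qpq‖). In particular, if ‖p − pqp‖ < 1 and ‖q − qpq‖ < 1, then ‖p − q‖ < 1. -/
import Mathlib

open scoped NNReal

/-- For a self-adjoint element sandwiched between `-(m • 1)` and `m • 1`, the norm is at
most `m`. -/
lemma norm_le_of_sandwich {A : Type*} [CStarAlgebra A] [PartialOrder A] [StarOrderedRing A]
    {x : A} {m : ℝ} (hx : IsSelfAdjoint x) (hm : 0 ≤ m)
    (h1 : -(algebraMap ℝ A m) ≤ x) (h2 : x ≤ algebraMap ℝ A m) : ‖x‖ ≤ m := by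
  obtain (h | h) := subsingleton_or_nontrivial A
  · simpa [Subsingleton.elim x 0] using hm
  have hub : ∀ r ∈ spectrum ℝ x, r ≤ m :=
    (le_algebraMap_iff_spectrum_le (ha := hx)).mp h2
  have hlb : ∀ r ∈ spectrum ℝ x, -m ≤ r :=
    (algebraMap_le_iff_le_spectrum (r := -m) (a := x) (ha := hx)).mp (by
      simpa [map_neg] using h1)
  rcases CStarAlgebra.norm_or_neg_norm_mem_spectrum (a := x) hx with h' | h'
  · exact hub _ h'
  · have := hlb _ h'
    linarith

lemma norm_cube_le_norm_cube {A : Type*} [CStarAlgebra A] {x : A} (hx : IsSelfAdjoint x) :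
    ‖x‖ ^ 3 ≤ ‖x ^ 3‖ := by
  rcases eq_or_ne ‖x‖ 0 with h | h
  · simp [h]
  have h4 : ‖x ^ 4‖ = ‖x‖ ^ 4 := by
    have := congrArg NNReal.toReal (hx.nnnorm_pow_two_pow 2)
    have h' : ‖x ^ 4‖ = ‖x‖ ^ 4 := by
      push_cast at this
      simpa using this
    exact h'
  have hmul : ‖x ^ 4‖ ≤ ‖x‖ * ‖x ^ 3‖ := by
    calc ‖x ^ 4‖ = ‖x * x ^ 3‖ := by rw [show (4 : ℕ) = 3 + 1 from rfl, pow_succ']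
    _ ≤ ‖x‖ * ‖x ^ 3‖ := norm_mul_le _ _
  have hpos : 0 < ‖x‖ := lt_of_le_of_ne (norm_nonneg x) (Ne.symm h)
  nlinarith [pow_nonneg (norm_nonneg x) 3]

/-- Let `p` and `q` be projections in a C*-algebra. Then
`‖p - q‖³ ≤ max (‖p - pqp‖) (‖q - qpq‖)`; in particular, if `‖p - pqp‖ < 1` and
`‖q - qpq‖ < 1`, then `‖p - q‖ < 1`. -/
theorem norm_projection_sub_cube_le {A : Type*} [CStarAlgebra A] (p q : A)
    (hp : p * p = p) (hps : star p = p) (hq : q * q = q) (hqs : star q = q) :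
    ‖p - q‖ ^ 3 ≤ max ‖p - p * q * p‖ ‖q - q * p * q‖ ∧
      (‖p - p * q * p‖ < 1 → ‖q - q * p * q‖ < 1 → ‖p - q‖ < 1) := by
  letI : PartialOrder A := CStarAlgebra.spectralOrder A
  letI : StarOrderedRing A := CStarAlgebra.spectralOrderedRing A
  have hpp : ∀ x : A, p * (p * x) = p * x := fun x => by rw [← mul_assoc, hp]
  have hqq : ∀ x : A, q * (q * x) = q * x := fun x => by rw [← mul_assoc, hq]
  set b := p - p * q * p with hb
  set c := q - q * p * q with hc
  set m := max ‖b‖ ‖c‖ with hm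
  have hm0 : 0 ≤ m := le_max_of_le_left (norm_nonneg b)
  have hmono : ∀ {r s : ℝ}, r ≤ s → algebraMap ℝ A r ≤ algebraMap ℝ A s := by
    intro r s h
    rw [← sub_nonneg, ← map_sub]
    have heq : algebraMap ℝ A (s - r) =
        star (algebraMap ℝ A (Real.sqrt (s - r))) * algebraMap ℝ A (Real.sqrt (s - r)) := by
      rw [(IsSelfAdjoint.algebraMap A (isSelfAdjoint_iff.mpr rfl)).star_eq, ← map_mul,
        Real.mul_self_sqrt (by linarith)]
    rw [heq]
    exact star_mul_self_nonneg _
  have key : ‖p - q‖ ^ 3 ≤ m := by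
    have hbeq : b = star (p - q * p) * (p - q * p) := by
      simp only [hb, star_sub, star_mul, hps, hqs, sub_mul, mul_sub, mul_assoc, hpp, hqq, hp]
      abel
    have hceq : c = star (q - p * q) * (q - p * q) := by
      simp only [hc, star_sub, star_mul, hps, hqs, sub_mul, mul_sub, mul_assoc, hpp, hqq, hq]
      abel
    have hbpos : (0 : A) ≤ b := hbeq ▸ star_mul_self_nonneg _
    have hcpos : (0 : A) ≤ c := hceq ▸ star_mul_self_nonneg _
    have hcube : (p - q) ^ 3 = b - c := by
      simp only [hb, hc, pow_succ, pow_zero, one_mul, sub_mul, mul_sub, mul_assoc,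
        hpp, hqq, hp, hq]
      abel
    have hsa : IsSelfAdjoint (p - q) := by
      rw [IsSelfAdjoint, star_sub, hps, hqs]
    have hsa3 : IsSelfAdjoint ((p - q) ^ 3) := hsa.pow 3
    have hub : (p - q) ^ 3 ≤ algebraMap ℝ A m := by
      rw [hcube]
      calc b - c ≤ b := by simpa using hcpos
      _ ≤ algebraMap ℝ A ‖b‖ := IsSelfAdjoint.le_algebraMap_norm_self (.of_nonneg hbpos)
      _ ≤ algebraMap ℝ A m := hmono (le_max_left _ _)
    have hlb : -(algebraMap ℝ A m) ≤ (p - q) ^ 3 := by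
      rw [hcube]
      calc -(algebraMap ℝ A m) ≤ -(algebraMap ℝ A ‖c‖) := by
            simp only [neg_le_neg_iff]
            exact hmono (le_max_right _ _)
      _ ≤ -c := by
            simpa using neg_le_neg (IsSelfAdjoint.le_algebraMap_norm_self (.of_nonneg hcpos))
      _ ≤ b - c := by simpa using hbpos
    have h3 : ‖(p - q) ^ 3‖ ≤ m := norm_le_of_sandwich hsa3 hm0 hlb hub
    exact (norm_cube_le_norm_cube hsa).trans h3
  refine ⟨key, fun h1 h2 => ?_⟩
  have hm1 : m < 1 := max_lt h1 h2
  have : ‖p - q‖ ^ 3 < 1 := lt_of_le_of_lt key hm1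
  nlinarith [norm_nonneg (p - q), sq_nonneg (‖p - q‖ - 1), sq_nonneg (‖p - q‖ + 1)]
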